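/- For every positive integer s divisible by q − 1, the polynomial ζ(−s, X) := ∑_{d≥0} S_d(s) X^d ∈ (F_q[x])[X] is divisible by X − 1 but not by (X − 1)²; that is, the zeta function of F_q[x] vanishes at −s to order exactly one. -/

import Mathlib

open Polynomial

/-- `lq q k` is the sum of the base-`q` digits of `k`. -/
def lq (q k : ℕ) : ℕ := (Nat.digits q k).sum

/-- `Spow F d s = ∑_{a monic, deg a = d} a^s ∈ F[x]`, the power sum over all monic polynomials
of degree `d`, realized as the sum over all coefficient tuples `c : Fin d → F`. -/
noncomputable def Spow (F : Type*) [Field F] [Fintype F] (d s : ℕ) : F[X] :=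
  ∑ c : Fin d → F, (X ^ d + ∑ i : Fin d, C (c i) * X ^ (i : ℕ)) ^ s

section Aux

open Finset

/-- Sum of `a^s` over all polynomials of degree `< M` (all coefficient tuples). -/
noncomputable def Vsum (F : Type*) [Field F] [Fintype F] (M s : ℕ) : F[X] :=
  ∑ c : Fin M → F, (∑ i : Fin M, C (c i) * X ^ (i : ℕ)) ^ s

variable (F : Type*) [Field F] [Fintype F]

lemma sum_pow_field (n : ℕ) :
    (∑ x : F, x ^ n) = if n ≠ 0 ∧ (Fintype.card F - 1) ∣ n then -1 else 0 := by
  classical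
  rcases eq_or_ne n 0 with rfl | hn
  · simp [FiniteField.cast_card_eq_zero]
  · have h1 : (∑ x : F, x ^ n) = ∑ x : Fˣ, (x : F) ^ n := by
      let φ : Fˣ ↪ F := ⟨fun x ↦ x, Units.val_injective⟩
      have huniv : univ.map φ = univ \ {0} := by
        ext x
        simpa only [mem_map, mem_univ, Function.Embedding.coeFn_mk, true_and, mem_sdiff,
          mem_singleton, φ] using (show (∃ a : Fˣ, (a : F) = x) ↔ x ≠ 0 from isUnit_iff_ne_zero)
      calc ∑ x : F, x ^ n = ∑ x ∈ univ \ {(0 : F)}, x ^ n := by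
            rw [← Finset.sum_sdiff ({0} : Finset F).subset_univ, Finset.sum_singleton,
              zero_pow hn, add_zero]
        _ = ∑ x : Fˣ, (x : F) ^ n := by simp [φ, ← huniv, univ.sum_map φ]
    rw [h1, FiniteField.sum_pow_units]
    simp [hn]

lemma Vsum_eq_zero {M s : ℕ} (h : s < M) : Vsum F M s = 0 := by
  classical
  unfold Vsum
  simp_rw [Finset.sum_pow_eq_sum_piAntidiag]
  rw [Finset.sum_comm]
  refine Finset.sum_eq_zero fun k hk => ?_
  rw [Finset.mem_piAntidiag] at hk
  have hsum : ∑ i : Fin M, k i = s := hk.1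
  have hex : ∃ i : Fin M, k i = 0 := by
    by_contra hall
    push_neg at hall
    have : M ≤ ∑ i : Fin M, k i := by
      calc M = ∑ _i : Fin M, 1 := by simp
        _ ≤ ∑ i : Fin M, k i :=
          Finset.sum_le_sum fun i _ => Nat.one_le_iff_ne_zero.2 (hall i)
    omega
  obtain ⟨i0, hi0⟩ := hex
  have key : (∑ c : Fin M → F, C (∏ i : Fin M, (c i) ^ k i) : F[X]) = 0 := by
    rw [← map_sum]
    have h2 : (∑ c : Fin M → F, ∏ i : Fin M, (c i) ^ k i) = 0 := by
      rw [← Fintype.piFinset_univ,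
        ← Finset.prod_univ_sum (fun _ : Fin M => (univ : Finset F)) (fun i y => y ^ k i)]
      refine Finset.prod_eq_zero (Finset.mem_univ i0) ?_
      rw [hi0]
      simp [FiniteField.cast_card_eq_zero]
    rw [h2, map_zero]
  calc (∑ c : Fin M → F, (Nat.multinomial Finset.univ k : F[X]) *
          ∏ i : Fin M, (C (c i) * X ^ (i : ℕ)) ^ k i)
      = ∑ c : Fin M → F, (Nat.multinomial Finset.univ k : F[X]) *
          (C (∏ i : Fin M, (c i) ^ k i) * ∏ i : Fin M, (X : F[X]) ^ ((i : ℕ) * k i)) := by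
        refine Finset.sum_congr rfl fun c _ => ?_
        congr 1
        simp_rw [mul_pow, ← C_pow, ← pow_mul]
        rw [Finset.prod_mul_distrib, ← map_prod]
      _ = 0 := by
        simp_rw [mul_comm ((Nat.multinomial Finset.univ k : F[X])), mul_assoc]
        rw [← Finset.sum_mul, key, zero_mul]

lemma Vsum_succ {d s : ℕ} (hdvd : (Fintype.card F - 1) ∣ s) :
    Vsum F (d + 1) s = Vsum F d s - Spow F d s := by
  classical
  let e : (Fin (d + 1) → F) ≃ F × (Fin d → F) :=
    ⟨fun c => (c (Fin.last d), fun i => c i.castSucc),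
     fun p => Fin.snoc p.2 p.1,
     fun c => by ext i; refine Fin.lastCases ?_ (fun j => ?_) i <;> simp,
     fun p => by ext i <;> simp⟩
  have step1 : Vsum F (d + 1) s
      = ∑ p : F × (Fin d → F),
          (C p.1 * X ^ d + ∑ i : Fin d, C (p.2 i) * X ^ (i : ℕ)) ^ s := by
    unfold Vsum
    refine Fintype.sum_equiv e _ _ fun c => ?_
    congr 1
    rw [Fin.sum_univ_castSucc]
    simp only [e, Equiv.coe_fn_mk, Fin.val_last, Fin.coe_castSucc]
    ring
  rw [step1, Fintype.sum_prod_type]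
  have hW0 : (∑ c : Fin d → F,
      (C (0:F) * X ^ d + ∑ i : Fin d, C (c i) * X ^ (i : ℕ)) ^ s) = Vsum F d s := by
    unfold Vsum; simp
  have hWx : ∀ x : F, x ≠ 0 → (∑ c : Fin d → F,
      (C x * X ^ d + ∑ i : Fin d, C (c i) * X ^ (i : ℕ)) ^ s) = Spow F d s := by
    intro x hx
    have hxs : x ^ s = 1 := by
      obtain ⟨t, rfl⟩ := hdvd
      rw [pow_mul, FiniteField.pow_card_sub_one_eq_one x hx, one_pow]
    have hrw : ∀ c : Fin d → F,
        (C x * X ^ d + ∑ i : Fin d, C (c i) * X ^ (i : ℕ)) ^ s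
          = (X ^ d + ∑ i : Fin d, C (x⁻¹ * c i) * X ^ (i : ℕ)) ^ s := by
      intro c
      have : (C x * X ^ d + ∑ i : Fin d, C (c i) * X ^ (i : ℕ))
          = C x * (X ^ d + ∑ i : Fin d, C (x⁻¹ * c i) * X ^ (i : ℕ)) := by
        rw [mul_add, Finset.mul_sum]
        congr 1
        refine Finset.sum_congr rfl fun i _ => ?_
        rw [← mul_assoc, ← C_mul, mul_inv_cancel_left₀ hx]
      rw [this, mul_pow, ← C_pow, hxs, C_1, one_mul]
    simp_rw [hrw]
    unfold Spow
    refine Fintype.sum_bijective (fun (c : Fin d → F) i => x⁻¹ * c i) ?_ _ _ fun c => rfl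
    rw [Function.bijective_iff_has_inverse]
    exact ⟨fun c i => x * c i, fun c => funext fun i => by field_simp,
      fun c => funext fun i => by field_simp⟩
  rw [← Finset.sum_erase_add _ _ (Finset.mem_univ (0 : F)), hW0]
  have herase : ∑ x ∈ univ.erase (0 : F), (∑ c : Fin d → F,
      (C x * X ^ d + ∑ i : Fin d, C (c i) * X ^ (i : ℕ)) ^ s)
      = (Fintype.card F - 1) • Spow F d s := by
    rw [Finset.sum_congr rfl fun x hx => hWx x (Finset.ne_of_mem_erase hx),
      Finset.sum_const, Finset.card_erase_of_mem (Finset.mem_univ _), Finset.card_univ]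
  rw [herase, nsmul_eq_mul]
  have hcast : ((Fintype.card F - 1 : ℕ) : F[X]) = -1 := by
    have h1 : 1 ≤ Fintype.card F := Fintype.card_pos
    rw [Nat.cast_sub h1, Nat.cast_one]
    rw [(map_natCast (C : F →+* F[X]) (Fintype.card F)).symm,
      FiniteField.cast_card_eq_zero, map_zero, zero_sub]
  rw [hcast]
  ring

lemma Vsum_zero {s : ℕ} (hs : 1 ≤ s) : Vsum F 0 s = 0 := by
  unfold Vsum
  rw [Fintype.sum_eq_zero]
  intro c
  simp [zero_pow (by omega : s ≠ 0)]

lemma Spow_eq_sub {d s : ℕ} (hdvd : (Fintype.card F - 1) ∣ s) :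
    Spow F d s = Vsum F d s - Vsum F (d + 1) s := by
  rw [Vsum_succ F hdvd]; ring

lemma sum_range_Spow {s : ℕ} (hdvd : (Fintype.card F - 1) ∣ s) (hs : 1 ≤ s) (n : ℕ) :
    ∑ d ∈ Finset.range n, Spow F d s = -Vsum F n s := by
  have : ∀ d ∈ Finset.range n, Spow F d s = Vsum F d s - Vsum F (d + 1) s :=
    fun d _ => Spow_eq_sub F hdvd
  rw [Finset.sum_congr rfl this, Finset.sum_range_sub' (fun d => Vsum F d s) n,
    Vsum_zero F hs, zero_sub]

lemma eval0_Vsum_succ {s : ℕ} (n : ℕ) :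
    eval (0 : F) (Vsum F (n + 1) s)
      = ((Fintype.card F : F) ^ n) * ∑ x : F, x ^ s := by
  classical
  unfold Vsum
  rw [eval_finset_sum]
  have hc : ∀ c : Fin (n + 1) → F,
      eval (0 : F) ((∑ i : Fin (n + 1), C (c i) * X ^ (i : ℕ)) ^ s) = (c 0) ^ s := by
    intro c
    rw [eval_pow, eval_finset_sum]
    congr 1
    rw [Finset.sum_eq_single_of_mem (0 : Fin (n + 1)) (Finset.mem_univ _)]
    · simp
    · intro i _ hi
      have : (i : ℕ) ≠ 0 := fun h => hi (Fin.ext h)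
      simp [zero_pow this]
  rw [Finset.sum_congr rfl fun c _ => hc c]
  let e : (Fin (n + 1) → F) ≃ F × (Fin n → F) :=
    ⟨fun c => (c 0, fun i => c i.succ),
     fun p => Fin.cons p.1 p.2,
     fun c => by ext i; refine Fin.cases ?_ (fun j => ?_) i <;> simp,
     fun p => by ext i <;> simp⟩
  rw [Fintype.sum_equiv e (fun c : Fin (n + 1) → F => c 0 ^ s) (fun p => p.1 ^ s) fun c => rfl,
    Fintype.sum_prod_type]
  simp only [Finset.sum_const, Finset.card_univ, nsmul_eq_mul]
  rw [← Finset.mul_sum]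
  congr 1
  rw [show Fintype.card (Fin n → F) = Fintype.card F ^ n by
    simp [Fintype.card_pi]]
  push_cast
  ring

end Aux

/-- For every positive integer `s` divisible by `q − 1`, the polynomial
`ζ(−s, X) = ∑_{d ≥ 0} S_d(s) X^d ∈ (F_q[x])[X]` is divisible by `X − 1` but not by `(X − 1)²`;
i.e., the zeta function of `F_q[x]` vanishes at `−s` to order exactly one. -/
theorem statement5 (F : Type*) [Field F] [Fintype F] (q : ℕ) (hq : q = Fintype.card F)
    (s : ℕ) (hs : 1 ≤ s) (hdvd : (q - 1) ∣ s) :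
    (X - 1 : Polynomial F[X]) ∣ (∑ᶠ d : ℕ, C (Spow F d s) * X ^ d) ∧
      ¬ (X - 1 : Polynomial F[X]) ^ 2 ∣ (∑ᶠ d : ℕ, C (Spow F d s) * X ^ d) := by
  subst hq
  classical
  set f : ℕ → Polynomial F[X] := fun d => C (Spow F d s) * X ^ d with hf
  have hspow0 : ∀ d, s + 1 ≤ d → Spow F d s = 0 := by
    intro d hd
    rw [Spow_eq_sub F hdvd, Vsum_eq_zero F (by omega), Vsum_eq_zero F (by omega), sub_zero]
  have hsupp : Function.support f ⊆ ↑(Finset.range (s + 2)) := by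
    intro d hd
    simp only [Finset.coe_range, Set.mem_Iio]
    by_contra hlt
    push_neg at hlt
    apply hd
    simp only [f, hspow0 d (by omega), map_zero, zero_mul]
  have hZ : (∑ᶠ d : ℕ, C (Spow F d s) * X ^ d) = ∑ d ∈ Finset.range (s + 2), f d :=
    finsum_eq_sum_of_support_subset f hsupp
  have hX1 : (X - 1 : Polynomial F[X]) = X - C 1 := by rw [map_one]
  rw [hZ]
  constructor
  · rw [hX1, dvd_iff_isRoot]
    show eval (1 : F[X]) (∑ d ∈ Finset.range (s + 2), f d) = 0
    rw [eval_finset_sum]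
    simp only [f, eval_mul, eval_C, eval_pow, eval_X, eval_one, one_pow, mul_one]
    rw [sum_range_Spow F hdvd hs, Vsum_eq_zero F (by omega), neg_zero]
  · intro hdvd2
    -- evaluate coefficients at 0
    have hsum_pow : (∑ x : F, x ^ s) = -1 := by
      rw [sum_pow_field F s, if_pos ⟨by omega, hdvd⟩]
    have hV : ∀ n : ℕ, eval (0 : F) (Vsum F (n + 1) s)
        = ((Fintype.card F : F) ^ n) * (-1) := by
      intro n; rw [eval0_Vsum_succ F n, hsum_pow]
    have hcard0 : ((Fintype.card F : F)) = 0 := FiniteField.cast_card_eq_zero F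
    have he0 : eval (0 : F) (Spow F 0 s) = 1 := by
      rw [Spow_eq_sub F hdvd, eval_sub, Vsum_zero F hs, eval_zero, hV 0]
      simp
    have he1 : eval (0 : F) (Spow F 1 s) = -1 := by
      rw [Spow_eq_sub F hdvd, eval_sub, hV 0, hV 1, hcard0]
      simp
    have heD : ∀ d, 2 ≤ d → eval (0 : F) (Spow F d s) = 0 := by
      intro d hd
      obtain ⟨m, rfl⟩ : ∃ m, d = m + 2 := ⟨d - 2, by omega⟩
      rw [Spow_eq_sub F hdvd, eval_sub, hV (m + 1), hV (m + 2), hcard0]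
      simp
    have hmap := map_dvd (mapRingHom (evalRingHom (0 : F))) hdvd2
    rw [map_pow, map_sub] at hmap
    simp only [coe_mapRingHom, map_X, Polynomial.map_one] at hmap
    have hZmap : Polynomial.map (evalRingHom (0 : F)) (∑ d ∈ Finset.range (s + 2), f d)
        = 1 - X := by
      rw [Polynomial.map_sum]
      have hterm : ∀ d, Polynomial.map (evalRingHom (0 : F)) (f d)
          = C (eval (0 : F) (Spow F d s)) * X ^ d := by
        intro d
        simp only [f, Polynomial.map_mul, Polynomial.map_C, Polynomial.map_pow, map_X,
          coe_evalRingHom]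
      rw [Finset.sum_congr rfl fun d _ => hterm d]
      rw [← Finset.sum_subset (Finset.range_subset_range.2 (by omega : 2 ≤ s + 2))
        (fun d _ hd => by
          rw [heD d (by simp at hd; omega), map_zero, zero_mul])]
      rw [Finset.sum_range_succ, Finset.sum_range_one, he0, he1]
      simp
      ring
    rw [hZmap] at hmap
    have hne : (1 - X : F[X]) ≠ 0 := by
      have : (1 - X : F[X]) = -(X - C 1) := by rw [map_one]; ring
      rw [this, neg_ne_zero]
      exact X_sub_C_ne_zero 1
    have hle := Polynomial.natDegree_le_of_dvd hmap hne
    have hdeg2 : ((X - 1 : F[X]) ^ 2).natDegree = 2 := by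
      rw [natDegree_pow, show (X - 1 : F[X]) = X - C 1 by rw [map_one], natDegree_X_sub_C]
    have hdeg1 : (1 - X : F[X]).natDegree = 1 := by
      rw [show (1 - X : F[X]) = -(X - C 1) by rw [map_one]; ring, natDegree_neg,
        natDegree_X_sub_C]
    omega
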